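/- (Greedy-search decomposition.) Let W_s ∈ ℝ^{N×p}, let w ∈ ℝ^N satisfy W_sᵀ·w = 0 and wᵀw ≠ 0, and let V ∈ ℝ^{N×m}, with W_sᵀW_s and VᵀV invertible. Let W = (W_s, w) be the matrix obtained by appending w as a new column to W_s. Then tr((WᵀW)⁻¹ WᵀV (VᵀV)⁻¹ VᵀW) = tr((W_sᵀW_s)⁻¹ W_sᵀV (VᵀV)⁻¹ VᵀW_s) + (wᵀV (VᵀV)⁻¹ Vᵀw) / (wᵀw); that is, when a candidate feature is orthogonalised against the already-selected features, the sum of squared canonical correlation coefficients decomposes as the previous sum plus the squared multiple correlation of the orthogonalised candidate with V. -/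

import Mathlib

set_option maxHeartbeats 1000000


open Matrix

lemma trace_fromBlocks' {n₁ n₂ : Type*} [Fintype n₁] [Fintype n₂] [DecidableEq n₁]
    [DecidableEq n₂] (A : Matrix n₁ n₁ ℝ) (B : Matrix n₁ n₂ ℝ) (C : Matrix n₂ n₁ ℝ)
    (D : Matrix n₂ n₂ ℝ) :
    trace (fromBlocks A B C D) = trace A + trace D := by
  simp [Matrix.trace, Matrix.diag, Fintype.sum_sum_type, fromBlocks]

/-- Greedy-search decomposition: appending a column `w` orthogonal to `W_s` adds its squared
multiple correlation with `V` to the sum of squared canonical correlation coefficients. -/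
theorem greedy_search_decomposition {N p m : ℕ}
    (Ws : Matrix (Fin N) (Fin p) ℝ) (w : Fin N → ℝ)
    (V : Matrix (Fin N) (Fin m) ℝ)
    (horth : Wsᵀ.mulVec w = 0) (hw : w ⬝ᵥ w ≠ 0)
    (hWs : IsUnit (Wsᵀ * Ws)) (hVV : IsUnit (Vᵀ * V))
    (W : Matrix (Fin N) (Fin p ⊕ Unit) ℝ)
    (hW : W = fromCols Ws (Matrix.of fun i (_ : Unit) => w i)) :
    trace ((Wᵀ * W)⁻¹ * Wᵀ * V * (Vᵀ * V)⁻¹ * Vᵀ * W)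
      = trace ((Wsᵀ * Ws)⁻¹ * Wsᵀ * V * (Vᵀ * V)⁻¹ * Vᵀ * Ws)
        + (w ⬝ᵥ (V * (Vᵀ * V)⁻¹ * Vᵀ).mulVec w) / (w ⬝ᵥ w) := by
  subst hW
  set wc : Matrix (Fin N) Unit ℝ := Matrix.of fun i (_ : Unit) => w i with hwc
  set A := Wsᵀ * Ws with hA
  set D := wcᵀ * wc with hD
  have hWsw : Wsᵀ * wc = 0 := by
    ext j u
    have := congrFun horth j
    simpa [wc, Matrix.mul_apply, Matrix.mulVec, dotProduct] using this
  have hwWs : wcᵀ * Ws = 0 := by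
    have := congrArg Matrix.transpose hWsw
    simpa [Matrix.transpose_mul] using this
  have hDval : D = Matrix.of fun (_ _ : Unit) => w ⬝ᵥ w := by
    ext u v
    simp [hD, wc, Matrix.mul_apply, dotProduct]
  have hDunit : IsUnit D := by
    rw [Matrix.isUnit_iff_isUnit_det]
    rw [hDval, Matrix.det_unique]
    simpa using isUnit_iff_ne_zero.mpr hw
  have hDinv : D⁻¹ = Matrix.of fun (_ _ : Unit) => (w ⬝ᵥ w)⁻¹ := by
    rw [Matrix.inv_def, Matrix.adjugate_subsingleton, hDval, Matrix.det_unique,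
      Ring.inverse_eq_inv]
    ext u v
    simp [Matrix.smul_apply, Matrix.one_apply, Subsingleton.elim u v]
  have hWW : (fromCols Ws wc)ᵀ * fromCols Ws wc = fromBlocks A 0 0 D := by
    rw [transpose_fromCols, fromRows_mul_fromCols, hWsw, hwWs]
  have hWWinv : ((fromCols Ws wc)ᵀ * fromCols Ws wc)⁻¹ = fromBlocks A⁻¹ 0 0 D⁻¹ := by
    rw [hWW, inv_fromBlocks_zero₂₁_of_isUnit_iff A 0 D (by simp [hWs, hDunit])]
    simp
  set M := (Vᵀ * V)⁻¹ with hM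
  rw [hWWinv, transpose_fromCols]
  rw [fromBlocks_mul_fromRows]
  simp only [Matrix.zero_mul, add_zero, zero_add]
  rw [fromRows_mul, fromRows_mul, fromRows_mul, fromRows_mul_fromCols,
    trace_fromBlocks']
  congr 1
  -- trace of the 1×1 block
  have hPentry : ∀ (Q : Matrix (Fin N) (Fin N) ℝ),
      (wcᵀ * Q * wc) () () = w ⬝ᵥ Q.mulVec w := by
    intro Q
    simp only [wc, Matrix.mul_apply, dotProduct, Matrix.mulVec, of_apply, transpose_apply,
      Finset.sum_mul, Finset.mul_sum]
    rw [Finset.sum_comm]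
    exact Finset.sum_congr rfl fun x _ => Finset.sum_congr rfl fun y _ => by ring
  calc trace (D⁻¹ * wcᵀ * V * M * Vᵀ * wc)
      = (D⁻¹ * (wcᵀ * (V * M * Vᵀ) * wc)) () () := by
        rw [Matrix.trace]
        simp only [Fintype.sum_unique, Matrix.diag]
        congr 1
        simp only [Matrix.mul_assoc]
    _ = (w ⬝ᵥ w)⁻¹ * (wcᵀ * (V * M * Vᵀ) * wc) () () := by
        rw [hDinv]; simp [Matrix.mul_apply]
    _ = w ⬝ᵥ (V * M * Vᵀ).mulVec w / (w ⬝ᵥ w) := by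
        rw [hPentry, div_eq_inv_mul]
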